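/- If G is a graph with n ≥ 2 vertices and m ≥ 1 edges that attains the minimum degree-based entropy among all graphs with n vertices and m edges, then G is a threshold graph. -/

import Mathlib

open Finset

/-- Degree-based entropy: `I_d(G) = log₂(2m) - (1/(2m)) ∑_v d(v) log₂ d(v)`. -/
noncomputable def degEntropy {V : Type} [Fintype V] (G : SimpleGraph V) : ℝ :=
  Real.logb 2 (2 * (G.edgeSet.ncard : ℝ)) -
    (1 / (2 * (G.edgeSet.ncard : ℝ))) *
      ∑ v : V, ((G.neighborSet v).ncard : ℝ) * Real.logb 2 ((G.neighborSet v).ncard)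

/-- The threshold-graph characterization: no four distinct vertices `u v w x` with
`uv, wx ∈ E` and `uw, vx ∉ E`. -/
def IsThresholdGraph {V : Type} (G : SimpleGraph V) : Prop :=
  ¬ ∃ u v w x : V, u ≠ v ∧ u ≠ w ∧ u ≠ x ∧ v ≠ w ∧ v ≠ x ∧ w ≠ x ∧
      G.Adj u v ∧ G.Adj w x ∧ ¬ G.Adj u w ∧ ¬ G.Adj v x

lemma step_lower (a : ℕ) (ha : 1 ≤ a) :
    Real.log a + 1 < ((a:ℝ)+1) * Real.log ((a:ℝ)+1) - (a:ℝ) * Real.log a := by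
  have ha1 : (1:ℝ) ≤ (a:ℝ) := by exact_mod_cast ha
  have hpos : (0:ℝ) < (a:ℝ) := by linarith
  have hpos1 : (0:ℝ) < (a:ℝ) + 1 := by linarith
  have hx : (0:ℝ) < (a:ℝ) / ((a:ℝ)+1) := by positivity
  have hne : (a:ℝ) / ((a:ℝ)+1) ≠ 1 :=
    ne_of_lt (by rw [div_lt_one hpos1]; linarith)
  have hlog := Real.log_lt_sub_one_of_pos hx hne
  rw [Real.log_div (by linarith) (by linarith)] at hlog
  have h1 : (a:ℝ) / ((a:ℝ)+1) - 1 = -1/((a:ℝ)+1) := by field_simp; ring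
  rw [h1] at hlog
  have h2 : (1:ℝ) < ((a:ℝ)+1) * (Real.log ((a:ℝ)+1) - Real.log a) := by
    have := mul_lt_mul_of_pos_left hlog hpos1
    have he : ((a:ℝ)+1) * (-1/((a:ℝ)+1)) = -1 := by field_simp
    nlinarith
  nlinarith

lemma step_upper (b : ℕ) (hb : 1 ≤ b) :
    (b:ℝ) * Real.log b - ((b:ℝ)-1) * Real.log ((b:ℝ)-1) ≤ Real.log b + 1 := by
  rcases Nat.eq_or_lt_of_le hb with h1 | h2
  · subst h1
    simp
  · have hb2 : (2:ℝ) ≤ (b:ℝ) := by exact_mod_cast h2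
    have hc : (0:ℝ) < (b:ℝ) - 1 := by linarith
    have hx : (0:ℝ) < (b:ℝ) / ((b:ℝ)-1) := by positivity
    have hne : (b:ℝ) / ((b:ℝ)-1) ≠ 1 :=
      ne_of_gt (by rw [lt_div_iff₀ hc]; linarith)
    have hlog := Real.log_lt_sub_one_of_pos hx hne
    rw [Real.log_div (by linarith) (by linarith)] at hlog
    have h1 : (b:ℝ) / ((b:ℝ)-1) - 1 = 1/((b:ℝ)-1) := by field_simp; ring
    rw [h1] at hlog
    have h2 : ((b:ℝ)-1) * (Real.log b - Real.log ((b:ℝ)-1)) < 1 := by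
      have := mul_lt_mul_of_pos_left hlog hc
      have he : ((b:ℝ)-1) * (1/((b:ℝ)-1)) = 1 := by field_simp
      nlinarith
    nlinarith

lemma key_log (a b : ℕ) (hb : 1 ≤ b) (hab : b ≤ a) :
    (a:ℝ) * Real.log a + (b:ℝ) * Real.log b
      < ((a:ℝ)+1) * Real.log ((a:ℝ)+1) + ((b:ℝ)-1) * Real.log ((b:ℝ)-1) := by
  have h1 := step_lower a (le_trans hb hab)
  have h2 := step_upper b hb
  have h3 : Real.log b ≤ Real.log a :=
    Real.log_le_log (by exact_mod_cast hb) (by exact_mod_cast hab)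
  linarith

lemma key_logb (a b : ℕ) (hb : 1 ≤ b) (hab : b ≤ a) :
    (a:ℝ) * Real.logb 2 a + (b:ℝ) * Real.logb 2 b
      < ((a:ℝ)+1) * Real.logb 2 ((a:ℝ)+1) + ((b:ℝ)-1) * Real.logb 2 ((b:ℝ)-1) := by
  have h := key_log a b hb hab
  have h2 : (0:ℝ) < (Real.log 2)⁻¹ := by
    rw [inv_pos]; exact Real.log_pos (by norm_num)
  simp only [Real.logb, div_eq_mul_inv]
  nlinarith

section
variable {n : ℕ} (G : SimpleGraph (Fin n)) (u w x : Fin n)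

def swapGraph (huw : u ≠ w) : SimpleGraph (Fin n) where
  Adj a b := (G.Adj a b ∧ ¬((a = w ∧ b = x) ∨ (a = x ∧ b = w))) ∨ ((a = u ∧ b = w) ∨ (a = w ∧ b = u))
  symm := by
    constructor
    intro a b h
    rcases h with ⟨h1, h2⟩ | h
    · exact Or.inl ⟨h1.symm, by tauto⟩
    · exact Or.inr (by tauto)
  loopless := by
    constructor
    intro a h
    rcases h with ⟨h1, _⟩ | ⟨h1, h2⟩ | ⟨h1, h2⟩ <;>
      first
        | exact G.loopless.irrefl a h1
        | exact huw (h1 ▸ h2 ▸ rfl)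

lemma swap_nbhd_u (huw : u ≠ w) (hux : u ≠ x) :
    (swapGraph G u w x huw).neighborSet u = insert w (G.neighborSet u) := by
  have huu : u = u := rfl
  ext b
  rw [SimpleGraph.mem_neighborSet, Set.mem_insert_iff, SimpleGraph.mem_neighborSet]
  show ((G.Adj u b ∧ ¬((u = w ∧ b = x) ∨ (u = x ∧ b = w))) ∨ ((u = u ∧ b = w) ∨ (u = w ∧ b = u)))
    ↔ b = w ∨ G.Adj u b
  tauto

lemma swap_nbhd_x (huw : u ≠ w) (hux : u ≠ x) (hwx : w ≠ x) :
    (swapGraph G u w x huw).neighborSet x = G.neighborSet x \ {w} := by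
  have hxx : x = x := rfl
  have hxu : x ≠ u := hux.symm
  have hxw : x ≠ w := hwx.symm
  ext b
  rw [SimpleGraph.mem_neighborSet, Set.mem_diff, Set.mem_singleton_iff,
    SimpleGraph.mem_neighborSet]
  show ((G.Adj x b ∧ ¬((x = w ∧ b = x) ∨ (x = x ∧ b = w))) ∨ ((x = u ∧ b = w) ∨ (x = w ∧ b = u)))
    ↔ G.Adj x b ∧ ¬ b = w
  tauto

lemma swap_nbhd_w (huw : u ≠ w) (hwx : w ≠ x) :
    (swapGraph G u w x huw).neighborSet w = insert u (G.neighborSet w \ {x}) := by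
  have hww : w = w := rfl
  have hwu : w ≠ u := huw.symm
  ext b
  rw [SimpleGraph.mem_neighborSet, Set.mem_insert_iff, Set.mem_diff, Set.mem_singleton_iff,
    SimpleGraph.mem_neighborSet]
  show ((G.Adj w b ∧ ¬((w = w ∧ b = x) ∨ (w = x ∧ b = w))) ∨ ((w = u ∧ b = w) ∨ (w = w ∧ b = u)))
    ↔ b = u ∨ (G.Adj w b ∧ ¬ b = x)
  tauto

lemma swap_nbhd_other (huw : u ≠ w) (a : Fin n) (hau : a ≠ u) (haw : a ≠ w) (hax : a ≠ x) :
    (swapGraph G u w x huw).neighborSet a = G.neighborSet a := by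
  ext b
  rw [SimpleGraph.mem_neighborSet, SimpleGraph.mem_neighborSet]
  show ((G.Adj a b ∧ ¬((a = w ∧ b = x) ∨ (a = x ∧ b = w))) ∨ ((a = u ∧ b = w) ∨ (a = w ∧ b = u)))
    ↔ G.Adj a b
  tauto

lemma swap_edgeSet (huw : u ≠ w) :
    (swapGraph G u w x huw).edgeSet = insert s(u,w) (G.edgeSet \ {s(w,x)}) := by
  ext e
  induction e using Sym2.ind with
  | _ a b =>
    simp only [SimpleGraph.mem_edgeSet, swapGraph, Set.mem_insert_iff, Set.mem_diff,
      Set.mem_singleton_iff, Sym2.eq_iff]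
    tauto
end

lemma swap_contradiction {n m : ℕ} (hm : 1 ≤ m) (G : SimpleGraph (Fin n))
    (hGm : G.edgeSet.ncard = m)
    (hmin : ∀ H : SimpleGraph (Fin n), H.edgeSet.ncard = m → degEntropy G ≤ degEntropy H)
    (u w x : Fin n) (huw : u ≠ w) (hux : u ≠ x)
    (hadj : G.Adj w x) (hno : ¬ G.Adj u w)
    (hdeg : (G.neighborSet x).ncard ≤ (G.neighborSet u).ncard) : False := by
  have hwx : w ≠ x := hadj.ne
  set H := swapGraph G u w x huw with hH
  -- edge count of H
  have hsuw : s(u,w) ∉ G.edgeSet \ {s(w,x)} := fun h => hno h.1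
  have hswx : s(w,x) ∈ G.edgeSet := hadj
  have hHm : H.edgeSet.ncard = m := by
    rw [hH, swap_edgeSet, Set.ncard_insert_of_notMem hsuw (Set.toFinite _),
      Set.ncard_diff_singleton_of_mem hswx, hGm]
    omega
  -- degree facts
  have hwnx : w ∈ G.neighborSet x := hadj.symm
  have hxnw : x ∈ G.neighborSet w := hadj
  have hwnu : w ∉ G.neighborSet u := hno
  have hunw : u ∉ G.neighborSet w \ {x} := fun h => hno h.1.symm
  have hxu : (1 : ℕ) ≤ (G.neighborSet x).ncard := (Set.ncard_pos (Set.toFinite _)).mpr ⟨w, hwnx⟩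
  have hw1 : (1 : ℕ) ≤ (G.neighborSet w).ncard := (Set.ncard_pos (Set.toFinite _)).mpr ⟨x, hxnw⟩
  have hdu : (H.neighborSet u).ncard = (G.neighborSet u).ncard + 1 := by
    rw [hH, swap_nbhd_u G u w x huw hux,
      Set.ncard_insert_of_notMem hwnu (Set.toFinite _)]
  have hdx : (H.neighborSet x).ncard = (G.neighborSet x).ncard - 1 := by
    rw [hH, swap_nbhd_x G u w x huw hux hwx,
      Set.ncard_diff_singleton_of_mem hwnx]
  have hdw : (H.neighborSet w).ncard = (G.neighborSet w).ncard := by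
    rw [hH, swap_nbhd_w G u w x huw hwx,
      Set.ncard_insert_of_notMem hunw (Set.toFinite _),
      Set.ncard_diff_singleton_of_mem hxnw]
    omega
  have hother : ∀ a : Fin n, a ≠ u → a ≠ x → (H.neighborSet a).ncard = (G.neighborSet a).ncard := by
    intro a hau hax
    by_cases haw : a = w
    · subst haw; exact hdw
    · rw [hH, swap_nbhd_other G u w x huw a hau haw hax]
  -- the sums
  set F : ℕ → ℝ := fun k => (k:ℝ) * Real.logb 2 (k:ℝ) with hF
  have hsum : ∑ v : Fin n, (F ((H.neighborSet v).ncard) - F ((G.neighborSet v).ncard))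
      = (F ((G.neighborSet u).ncard + 1) - F ((G.neighborSet u).ncard)) + (F ((G.neighborSet x).ncard - 1) - F ((G.neighborSet x).ncard)) := by
    rw [← Finset.sum_subset (Finset.subset_univ ({u, x} : Finset (Fin n)))
      (fun a _ ha => by
        have hau : a ≠ u := fun h => ha (by simp [h])
        have hax : a ≠ x := fun h => ha (by simp [h])
        rw [hother a hau hax, sub_self])]
    rw [Finset.sum_pair hux, hdu, hdx]
  have hkey : 0 < (F ((G.neighborSet u).ncard + 1) - F ((G.neighborSet u).ncard)) + (F ((G.neighborSet x).ncard - 1) - F ((G.neighborSet x).ncard)) := by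
    have h := key_logb ((G.neighborSet u).ncard) ((G.neighborSet x).ncard) hxu hdeg
    have hc1 : (((G.neighborSet u).ncard + 1 : ℕ) : ℝ) = ((G.neighborSet u).ncard : ℝ) + 1 := by push_cast; ring
    have hc2 : (((G.neighborSet x).ncard - 1 : ℕ) : ℝ) = ((G.neighborSet x).ncard : ℝ) - 1 := by
      rw [Nat.cast_sub hxu]; norm_num
    simp only [hF, hc1, hc2]
    linarith
  have hlt : ∑ v : Fin n, F ((G.neighborSet v).ncard) < ∑ v : Fin n, F ((H.neighborSet v).ncard) := by
    have := Finset.sum_sub_distrib (s := (Finset.univ : Finset (Fin n)))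
      (f := fun v => F ((H.neighborSet v).ncard)) (g := fun v => F ((G.neighborSet v).ncard))
    rw [this] at hsum
    linarith
  -- entropy comparison
  have hmpos : (0:ℝ) < 1 / (2 * (m:ℝ)) := by
    have : (1:ℝ) ≤ (m:ℝ) := by exact_mod_cast hm
    positivity
  have hent : degEntropy H < degEntropy G := by
    simp only [degEntropy, hHm, hGm]
    have := mul_lt_mul_of_pos_left hlt hmpos
    exact sub_lt_sub_left this _
  exact absurd (hmin H hHm) (not_le.mpr hent)

/-- a minimizer of the degree-based entropy among `(n,m)`-graphs
is a threshold graph. -/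
theorem minimizer_isThreshold {n m : ℕ} (hn : 2 ≤ n) (hm : 1 ≤ m)
    (G : SimpleGraph (Fin n)) (hGm : G.edgeSet.ncard = m)
    (hmin : ∀ H : SimpleGraph (Fin n), H.edgeSet.ncard = m → degEntropy G ≤ degEntropy H) :
    IsThresholdGraph G := by
  rintro ⟨u, v, w, x, huv, huw, hux, hvw, hvx, hwx, hauv, hawx, hnuw, hnvx⟩
  rcases le_total ((G.neighborSet x).ncard) ((G.neighborSet u).ncard) with hle | hle
  · exact swap_contradiction hm G hGm hmin u w x huw hux hawx hnuw hle
  · exact swap_contradiction hm G hGm hmin x v u hvx.symm hux.symm hauv.symm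
      (fun h => hnvx h.symm) hle
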